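/- If p : Y → X is a semicovering map with p(y₁) = x₁ and p(y₂) = x₂, then the induced map 𝒫p : 𝒫Y(y₁, y₂) → 𝒫X(x₁, x₂) on spaces of paths with prescribed endpoints (compact-open topology) is an open topological embedding. -/
import Mathlib

open Topology

open unitInterval

variable {X Y : Type*} [TopologicalSpace X] [TopologicalSpace Y]

/-- The space of paths in `X` starting at `x`, with the compact-open topology. -/
abbrev PathsFrom (X : Type*) [TopologicalSpace X] (x : X) : Type _ :=
  {α : C(I, X) // α 0 = x}

/-- Postcomposition `𝒫p : (𝒫Y)_y → (𝒫X)_{p(y)}`. -/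
def pathPost (p : C(Y, X)) (y : Y) (α : PathsFrom Y y) : PathsFrom X (p y) :=
  ⟨p.comp α.1, by simp [α.2]⟩

/-- The space of homotopies of paths starting at `x` (the initial-endpoint edge is fixed at `x`),
with the compact-open topology. -/
abbrev HtpysFrom (X : Type*) [TopologicalSpace X] (x : X) : Type _ :=
  {φ : C(I × I, X) // ∀ s, φ (s, 0) = x}

/-- Postcomposition `Φp : (ΦY)_y → (ΦX)_{p(y)}`. -/
def htpyPost (p : C(Y, X)) (y : Y) (φ : HtpysFrom Y y) : HtpysFrom X (p y) :=
  ⟨p.comp φ.1, by simp [φ.2]⟩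

/-- A semicovering map: a local homeomorphism with continuous lifting of paths and homotopies. -/
structure IsSemicoveringMap (p : C(Y, X)) : Prop where
  isLocalHomeomorph : IsLocalHomeomorph p
  pathLifting : ∀ y : Y, IsHomeomorph (pathPost p y)
  htpyLifting : ∀ y : Y, IsHomeomorph (htpyPost p y)

/-- The space of paths in `X` from `x₁` to `x₂`, with the compact-open topology. -/
abbrev PathsBetween (X : Type*) [TopologicalSpace X] (x₁ x₂ : X) : Type _ :=
  {α : C(I, X) // α 0 = x₁ ∧ α 1 = x₂}

/-- If `p : Y → X` is a semicovering with `p y₁ = x₁`, `p y₂ = x₂`, the induced map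
`𝒫Y(y₁,y₂) → 𝒫X(x₁,x₂)` is an open topological embedding. -/
theorem semicovering_pathsBetween_isOpenEmbedding {X Y : Type*} [TopologicalSpace X]
    [TopologicalSpace Y] (p : C(Y, X)) (hp : IsSemicoveringMap p) (y₁ y₂ : Y) :
    IsOpenEmbedding (fun α : PathsBetween Y y₁ y₂ =>
      (⟨p.comp α.1, by simp [α.2.1], by simp [α.2.2]⟩ : PathsBetween X (p y₁) (p y₂))) := by

  classical
  obtain ⟨e, he₂, hpe⟩ := hp.isLocalHomeomorph y₂
  let h : PathsFrom Y y₁ ≃ₜ PathsFrom X (p y₁) :=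
    IsHomeomorph.homeomorph _ (hp.pathLifting y₁)
  set F : PathsBetween Y y₁ y₂ → PathsBetween X (p y₁) (p y₂) :=
    (fun α : PathsBetween Y y₁ y₂ =>
      (⟨p.comp α.1, by simp [α.2.1], by simp [α.2.2]⟩ : PathsBetween X (p y₁) (p y₂))) with hFdef
  -- inclusions
  let jY : PathsBetween Y y₁ y₂ → PathsFrom Y y₁ := fun α => ⟨α.1, α.2.1⟩
  let jX : PathsBetween X (p y₁) (p y₂) → PathsFrom X (p y₁) := fun β => ⟨β.1, β.2.1⟩
  have hjYc : Continuous jY := Continuous.subtype_mk continuous_subtype_val _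
  have hjXc : Continuous jX := Continuous.subtype_mk continuous_subtype_val _
  have hcomm : jX ∘ F = ⇑h ∘ jY := by
    funext α
    exact Subtype.ext rfl
  have hFc : Continuous F := by
    apply Continuous.subtype_mk
    have : Continuous (fun α : PathsBetween Y y₁ y₂ => ((h (jY α) : PathsFrom X (p y₁)) : C(I, X))) :=
      continuous_subtype_val.comp (h.continuous.comp hjYc)
    exact this
  have hjYemb : IsEmbedding jY := by
    refine ⟨IsInducing.of_comp hjYc continuous_subtype_val ?_, ?_⟩
    · exact IsInducing.subtypeVal
    · intro a b hab
      exact Subtype.ext (congrArg (fun g => g.1) hab)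
  have hFemb : IsEmbedding F := by
    refine IsEmbedding.of_comp hFc hjXc ?_
    rw [hcomm]
    exact h.isEmbedding.comp hjYemb
  -- openness of the range
  let f : PathsBetween X (p y₁) (p y₂) → Y := fun β => ((h.symm ⟨β.1, β.2.1⟩ : PathsFrom Y y₁) : C(I, Y)) 1
  have hfc : Continuous f := by
    exact (continuous_eval_const 1).comp
      (continuous_subtype_val.comp (h.symm.continuous.comp hjXc))
  have hrange : Set.range F = f ⁻¹' e.source := by
    ext β
    constructor
    · rintro ⟨α, rfl⟩
      have h1 : (⟨(F α).1, (F α).2.1⟩ : PathsFrom X (p y₁)) = h (jY α) := Subtype.ext rfl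
      have : f (F α) = y₂ := by
        show ((h.symm ⟨(F α).1, (F α).2.1⟩ : PathsFrom Y y₁) : C(I, Y)) 1 = y₂
        rw [h1, h.symm_apply_apply]
        exact α.2.2
      simpa [this] using he₂
    · intro hβ
      set γ : PathsFrom Y y₁ := h.symm ⟨β.1, β.2.1⟩ with hγdef
      have hγ : h γ = ⟨β.1, β.2.1⟩ := h.apply_symm_apply _
      have hval : p.comp γ.1 = β.1 := congrArg Subtype.val hγ
      have hend : p ((γ : C(I, Y)) 1) = p y₂ := by
        have := ContinuousMap.congr_fun hval 1
        simpa [β.2.2] using this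
      have hmem : (γ : C(I, Y)) 1 ∈ e.source := hβ
      have hone : (γ : C(I, Y)) 1 = y₂ := by
        apply e.injOn hmem he₂
        have hpe' : ⇑p = ⇑e := hpe
        rw [← hpe']
        exact hend
      refine ⟨⟨γ.1, γ.2, hone⟩, Subtype.ext ?_⟩
      exact hval
  exact ⟨hFemb, hrange ▸ e.open_source.preimage hfc⟩
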